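/- Let {X_1, X_2} be a perfect 2-coloring of J(10,3) with quotient matrix [[12,9],[9,12]]. Then for any pairs {a,b} and {c,d} of distinct elements of {1,...,10}, |ab* ∩ X_1| ≡ |cd* ∩ X_1| (mod 3). -/

import Mathlib

/-- The Johnson graph `J(n,k)`: vertices are the `k`-element subsets of an
`n`-element set, two vertices adjacent when their intersection has `k-1` elements. -/
def johnsonGraph (n k : ℕ) : SimpleGraph {s : Finset (Fin n) // s.card = k} where
  Adj x y := (x.1 ∩ y.1).card = k - 1 ∧ x ≠ y
  symm := by
    constructor
    intro x y h
    exact ⟨by rw [Finset.inter_comm]; exact h.1, h.2.symm⟩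
  loopless := by
    constructor
    intro x h
    exact h.2 rfl

instance (n k : ℕ) : DecidableRel (johnsonGraph n k).Adj :=
  fun x y => inferInstanceAs (Decidable ((x.1 ∩ y.1).card = k - 1 ∧ x ≠ y))

/-- A perfect 2-coloring of a finite graph `G` with quotient matrix
`[[p11, p12], [p21, p22]]`: a partition of the vertices into nonempty parts
`X1`, `X2` such that every vertex of `Xi` has exactly `p i j` neighbors in `Xj`. -/
def IsPerfect2Coloring {V : Type*} [Fintype V] [DecidableEq V]
    (G : SimpleGraph V) [DecidableRel G.Adj] (X1 X2 : Finset V)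
    (p11 p12 p21 p22 : ℕ) : Prop :=
  X1 ∪ X2 = Finset.univ ∧ Disjoint X1 X2 ∧ X1.Nonempty ∧ X2.Nonempty ∧
  (∀ v ∈ X1, (G.neighborFinset v ∩ X1).card = p11 ∧
             (G.neighborFinset v ∩ X2).card = p12) ∧
  (∀ v ∈ X2, (G.neighborFinset v ∩ X1).card = p21 ∧
             (G.neighborFinset v ∩ X2).card = p22)

/-- `ab*`: the set of vertices of `J(10,3)` (3-subsets of `{0,…,9}`) containing
both `a` and `b`. -/
def star (a b : Fin 10) : Finset {s : Finset (Fin 10) // s.card = 3} :=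
  Finset.univ.filter (fun v => a ∈ v.1 ∧ b ∈ v.1)

/-- The indicator (as an integer) of whether the 3-subset `s` belongs to the
part `X1` of the coloring. -/
def ind (X1 : Finset {s : Finset (Fin 10) // s.card = 3})
    (s : Finset (Fin 10)) : ℤ :=
  (X1.filter (fun v => v.1 = s)).card

lemma mem_star {a b : Fin 10} {w : {s : Finset (Fin 10) // s.card = 3}} :
    w ∈ star a b ↔ a ∈ w.1 ∧ b ∈ w.1 := by
  simp [_root_.star]

open Finset in
lemma tri_aux (X1 X2 : Finset {s : Finset (Fin 10) // s.card = 3})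
    (h : IsPerfect2Coloring (johnsonGraph 10 3) X1 X2 12 9 9 12)
    (a b c : Fin 10) (hab : a ≠ b) (hac : a ≠ c) (hbc : b ≠ c) :
    ((star a b ∩ X1).card + (star a c ∩ X1).card + (star b c ∩ X1).card) % 3 = 0 := by
  have hcard : ({a, b, c} : Finset (Fin 10)).card = 3 := by
    rw [card_insert_of_notMem (by simp [hab, hac]),
        card_insert_of_notMem (by simp [hbc]), card_singleton]
  set v : {s : Finset (Fin 10) // s.card = 3} := ⟨{a,b,c}, hcard⟩ with hv
  have hva : a ∈ v.1 := by simp [hv]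
  have hvb : b ∈ v.1 := by simp [hv]
  have hvc : c ∈ v.1 := by simp [hv]
  have hsub : ∀ w : {s : Finset (Fin 10) // s.card = 3},
      a ∈ w.1 → b ∈ w.1 → c ∈ w.1 → w = v := by
    intro w ha hb hc
    apply Subtype.ext
    refine (Finset.eq_of_subset_of_card_le ?_ ?_).symm
    · intro x hx
      simp only [hv, mem_insert, mem_singleton] at hx
      rcases hx with rfl|rfl|rfl <;> assumption
    · rw [w.2, hcard]
  have hABi : star a b ∩ star a c = {v} := by
    ext w
    simp only [mem_inter, mem_star, mem_singleton]
    constructor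
    · rintro ⟨⟨ha, hb⟩, ⟨_, hc⟩⟩; exact hsub w ha hb hc
    · rintro rfl; exact ⟨⟨hva, hvb⟩, hva, hvc⟩
  have hACi : star a b ∩ star b c = {v} := by
    ext w
    simp only [mem_inter, mem_star, mem_singleton]
    constructor
    · rintro ⟨⟨ha, hb⟩, ⟨_, hc⟩⟩; exact hsub w ha hb hc
    · rintro rfl; exact ⟨⟨hva, hvb⟩, hvb, hvc⟩
  have hBCi : star a c ∩ star b c = {v} := by
    ext w
    simp only [mem_inter, mem_star, mem_singleton]
    constructor
    · rintro ⟨⟨ha, hc⟩, ⟨hb, _⟩⟩; exact hsub w ha hb hc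
    · rintro rfl; exact ⟨⟨hva, hvc⟩, hvb, hvc⟩
  have hadj : ∀ w, (johnsonGraph 10 3).Adj v w ↔ (v.1 ∩ w.1).card = 2 ∧ v ≠ w :=
    fun w => Iff.rfl
  have hN : star a b ∪ star a c ∪ star b c
      = insert v ((johnsonGraph 10 3).neighborFinset v) := by
    ext w
    simp only [mem_union, mem_star, mem_insert, SimpleGraph.mem_neighborFinset, hadj]
    constructor
    · intro hw
      by_cases hwv : w = v
      · exact Or.inl hwv
      · right
        refine ⟨?_, fun hvw => hwv hvw.symm⟩
        rcases hw with (⟨ha, hb⟩ | ⟨ha, hc⟩) | ⟨hb, hc⟩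
        · have hc : c ∉ w.1 := fun hc => hwv (hsub w ha hb hc)
          have : v.1 ∩ w.1 = {a, b} := by
            show ({a,b,c} : Finset (Fin 10)) ∩ w.1 = {a,b}
            rw [Finset.insert_inter_of_mem ha, Finset.insert_inter_of_mem hb,
                Finset.singleton_inter_of_notMem hc]
            simp
          rw [this, card_insert_of_notMem (by simp [hab]), card_singleton]
        · have hb : b ∉ w.1 := fun hb => hwv (hsub w ha hb hc)
          have : v.1 ∩ w.1 = {a, c} := by
            show ({a,b,c} : Finset (Fin 10)) ∩ w.1 = {a,c}
            rw [Finset.insert_inter_of_mem ha, Finset.insert_inter_of_notMem hb,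
                Finset.singleton_inter_of_mem hc]
          rw [this, card_insert_of_notMem (by simp [hac]), card_singleton]
        · have ha : a ∉ w.1 := fun ha => hwv (hsub w ha hb hc)
          have : v.1 ∩ w.1 = {b, c} := by
            show ({a,b,c} : Finset (Fin 10)) ∩ w.1 = {b,c}
            rw [Finset.insert_inter_of_notMem ha, Finset.insert_inter_of_mem hb,
                Finset.singleton_inter_of_mem hc]
          rw [this, card_insert_of_notMem (by simp [hbc]), card_singleton]
    · rintro (rfl | ⟨hcard2, hne⟩)
      · exact Or.inl (Or.inl ⟨hva, hvb⟩)
      · have hint : v.1 ∩ w.1 = ({a,b,c} : Finset (Fin 10)) ∩ w.1 := rfl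
        by_cases ha : a ∈ w.1 <;> by_cases hb : b ∈ w.1 <;> by_cases hc : c ∈ w.1
        · exact absurd (hsub w ha hb hc).symm hne
        · exact Or.inl (Or.inl ⟨ha, hb⟩)
        · exact Or.inl (Or.inr ⟨ha, hc⟩)
        · -- only a
          exfalso
          rw [hint, Finset.insert_inter_of_mem ha, Finset.insert_inter_of_notMem hb,
              Finset.singleton_inter_of_notMem hc] at hcard2
          simp at hcard2
        · exact Or.inr ⟨hb, hc⟩
        · exfalso
          rw [hint, Finset.insert_inter_of_notMem ha, Finset.insert_inter_of_mem hb,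
              Finset.singleton_inter_of_notMem hc] at hcard2
          simp at hcard2
        · exfalso
          rw [hint, Finset.insert_inter_of_notMem ha, Finset.insert_inter_of_notMem hb,
              Finset.singleton_inter_of_mem hc] at hcard2
          simp at hcard2
        · exfalso
          rw [hint, Finset.insert_inter_of_notMem ha, Finset.insert_inter_of_notMem hb,
              Finset.singleton_inter_of_notMem hc] at hcard2
          simp at hcard2
  -- cardinal bookkeeping
  set N := (johnsonGraph 10 3).neighborFinset v with hNdef
  have hvN : v ∉ N := by simp [hNdef]
  set A := star a b ∩ X1
  set B := star a c ∩ X1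
  set C := star b c ∩ X1
  have hAB : A ∩ B = {v} ∩ X1 := by
    rw [Finset.inter_inter_inter_comm, hABi, Finset.inter_self]
  have hAC : A ∩ C = {v} ∩ X1 := by
    rw [Finset.inter_inter_inter_comm, hACi, Finset.inter_self]
  have hBC : B ∩ C = {v} ∩ X1 := by
    rw [Finset.inter_inter_inter_comm, hBCi, Finset.inter_self]
  have h1 : (A ∪ B).card + ({v} ∩ X1).card = A.card + B.card := by
    rw [← hAB]; exact card_union_add_card_inter A B
  have h2 : ((A ∪ B) ∪ C).card + ({v} ∩ X1).card = (A ∪ B).card + C.card := by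
    have huc : (A ∪ B) ∩ C = {v} ∩ X1 := by
      rw [Finset.union_inter_distrib_right, hAC, hBC, Finset.union_self]
    rw [← huc]; exact card_union_add_card_inter (A ∪ B) C
  have h3 : (A ∪ B) ∪ C = insert v N ∩ X1 := by
    rw [← hN]; simp only [A, B, C, Finset.union_inter_distrib_right]
  have hvX12 : v ∈ X1 ∪ X2 := by rw [h.1]; exact mem_univ v
  by_cases hvX : v ∈ X1
  · have hε : ({v} ∩ X1).card = 1 := by
      rw [Finset.singleton_inter_of_mem hvX, card_singleton]
    have h12 : (N ∩ X1).card = 12 := (h.2.2.2.2.1 v hvX).1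
    have hins : insert v N ∩ X1 = insert v (N ∩ X1) := Finset.insert_inter_of_mem hvX
    have h13 : (insert v N ∩ X1).card = 13 := by
      rw [hins, card_insert_of_notMem (by simp [hvN]), h12]
    have h3c : ((A ∪ B) ∪ C).card = 13 := by rw [h3, h13]
    omega
  · have hε : ({v} ∩ X1).card = 0 := by
      rw [Finset.singleton_inter_of_notMem hvX, card_empty]
    have hvX2 : v ∈ X2 := by
      rcases Finset.mem_union.mp hvX12 with h'|h'
      · exact absurd h' hvX
      · exact h'
    have h9 : (N ∩ X1).card = 9 := (h.2.2.2.2.2 v hvX2).1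
    have h9' : (insert v N ∩ X1).card = 9 := by
      rw [Finset.insert_inter_of_notMem hvX, h9]
    have h3c : ((A ∪ B) ∪ C).card = 9 := by rw [h3, h9']
    omega

theorem type_well_defined_J103
    (X1 X2 : Finset {s : Finset (Fin 10) // s.card = 3})
    (h : IsPerfect2Coloring (johnsonGraph 10 3) X1 X2 12 9 9 12)
    (a b c d : Fin 10) (hab : a ≠ b) (hcd : c ≠ d) :
    (star a b ∩ X1).card % 3 = (star c d ∩ X1).card % 3 := by
  have quad : ∀ x y z w : Fin 10, x ≠ y → x ≠ z → x ≠ w → y ≠ z → y ≠ w → z ≠ w →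
      (star x z ∩ X1).card % 3 = (star y w ∩ X1).card % 3 := by
    intro x y z w h1 h2 h3 h4 h5 h6
    have t1 := tri_aux X1 X2 h x y z h1 h2 h4
    have t2 := tri_aux X1 X2 h x y w h1 h3 h5
    have t3 := tri_aux X1 X2 h x z w h2 h3 h6
    have t4 := tri_aux X1 X2 h y z w h4 h5 h6
    omega
  have hfresh : ∃ p q : Fin 10, p ≠ q ∧ p ∉ ({a,b,c,d} : Finset (Fin 10)) ∧
      q ∉ ({a,b,c,d} : Finset (Fin 10)) := by
    have h4 : ({a,b,c,d} : Finset (Fin 10)).card ≤ 4 := by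
      refine le_trans (Finset.card_insert_le _ _) ?_
      refine Nat.succ_le_succ ?_
      refine le_trans (Finset.card_insert_le _ _) ?_
      refine Nat.succ_le_succ ?_
      refine le_trans (Finset.card_insert_le _ _) ?_
      simp
    have hcc : 1 < (({a,b,c,d} : Finset (Fin 10))ᶜ).card := by
      rw [Finset.card_compl]
      simp only [Fintype.card_fin]
      omega
    obtain ⟨p, hp, q, hq, hpq⟩ := Finset.one_lt_card.mp hcc
    exact ⟨p, q, hpq, Finset.mem_compl.mp hp, Finset.mem_compl.mp hq⟩
  obtain ⟨p, q, hpq, hp, hq⟩ := hfresh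
  simp only [Finset.mem_insert, Finset.mem_singleton, not_or] at hp hq
  obtain ⟨hpa, hpb, hpc, hpd⟩ := hp
  obtain ⟨hqa, hqb, hqc, hqd⟩ := hq
  have e1 : (star a b ∩ X1).card % 3 = (star p q ∩ X1).card % 3 :=
    quad a p b q (Ne.symm hpa) hab (Ne.symm hqa) hpb hpq (Ne.symm hqb)
  have e2 : (star c d ∩ X1).card % 3 = (star p q ∩ X1).card % 3 :=
    quad c p d q (Ne.symm hpc) hcd (Ne.symm hqc) hpd hpq (Ne.symm hqd)
  rw [e1, e2]
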